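/- Let A, B, C be subspaces of a finite-dimensional vector space U over a field. Then the six subspaces A ∩ B ∩ C, A ∩ B, A ∩ C, B ∩ C, A, B are coordinated, i.e., there is a single linearly independent subset X ⊆ U such that X ∩ V spans V for each of these six subspaces V. -/

import Mathlib

open Submodule Set

/-- If `t` is a linearly independent set and `s ⊆ t`, then the spans of `s` and `t \ s`
are disjoint. -/
lemma disjoint_span_diff_aux {𝔽 U : Type*} [Field 𝔽] [AddCommGroup U] [Module 𝔽 U]
    {s t : Set U} (ht : LinearIndependent 𝔽 (fun x : t => (x : U))) (hst : s ⊆ t) :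
    Disjoint (span 𝔽 s) (span 𝔽 (t \ s)) := by
  have h := ht.disjoint_span_image (s := (↑) ⁻¹' s) (t := (↑) ⁻¹' (t \ s))
    ((Set.disjoint_sdiff_right).preimage _)
  have h1 : (fun x : t => (x : U)) '' ((↑) ⁻¹' s) = s := by
    rw [Subtype.image_preimage_coe]
    exact Set.inter_eq_right.mpr hst
  have h2 : (fun x : t => (x : U)) '' ((↑) ⁻¹' (t \ s)) = t \ s := by
    rw [Subtype.image_preimage_coe]
    exact Set.inter_eq_right.mpr (Set.diff_subset)
  rwa [h1, h2] at h

/-- If `t₁, t₂` are linearly independent spanning sets of `V₁, V₂`, both containing a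
set `s` spanning `V₁ ⊓ V₂`, then `t₁ ∪ t₂` is linearly independent. -/
lemma union_li_aux {𝔽 U : Type*} [Field 𝔽] [AddCommGroup U] [Module 𝔽 U]
    {s t₁ t₂ : Set U} {V₁ V₂ : Submodule 𝔽 U}
    (hs : span 𝔽 s = V₁ ⊓ V₂) (hs1 : s ⊆ t₁) (hs2 : s ⊆ t₂)
    (h1 : LinearIndependent 𝔽 (fun x : t₁ => (x : U)))
    (h2 : LinearIndependent 𝔽 (fun x : t₂ => (x : U)))
    (hsp1 : span 𝔽 t₁ = V₁) (hsp2 : span 𝔽 t₂ = V₂) :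
    LinearIndependent 𝔽 (fun x : ↥(t₁ ∪ t₂) => (x : U)) := by
  have hunion : t₁ ∪ t₂ = t₁ ∪ (t₂ \ s) := by
    apply Set.Subset.antisymm
    · rintro x (hx | hx)
      · exact Or.inl hx
      · by_cases h : x ∈ s
        · exact Or.inl (hs1 h)
        · exact Or.inr ⟨hx, h⟩
    · rintro x (hx | hx)
      · exact Or.inl hx
      · exact Or.inr hx.1
  rw [hunion]
  refine LinearIndepOn.id_union h1 (LinearIndepOn.mono h2 Set.diff_subset) ?_
  have hdisj : Disjoint (span 𝔽 s) (span 𝔽 (t₂ \ s)) := disjoint_span_diff_aux h2 hs2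
  have key : span 𝔽 t₁ ⊓ span 𝔽 (t₂ \ s) ≤ span 𝔽 s := by
    rintro x ⟨hx1, hx2⟩
    rw [hs]
    exact ⟨hsp1 ▸ hx1, hsp2 ▸ span_mono Set.diff_subset hx2⟩
  rw [disjoint_iff_inf_le] at hdisj ⊢
  intro x hx
  exact hdisj (Submodule.mem_inf.mpr ⟨key hx, (Submodule.mem_inf.mp hx).2⟩)

/-- Helper: extend a linearly independent subset of a submodule to an independent
spanning set of that submodule. -/
lemma extend_in_submodule {𝔽 U : Type*} [Field 𝔽] [AddCommGroup U] [Module 𝔽 U]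
    {s : Set U} (V : Submodule 𝔽 U) (hsV : s ⊆ (V : Set U))
    (hs : LinearIndependent 𝔽 (fun x : s => (x : U))) :
    ∃ t : Set U, s ⊆ t ∧ t ⊆ (V : Set U) ∧
      LinearIndependent 𝔽 (fun x : t => (x : U)) ∧ span 𝔽 t = V := by
  obtain ⟨b, hbV, hsb, hVb, hb⟩ := exists_linearIndepOn_extension (v := id) hs hsV
  refine ⟨b, hsb, hbV, hb, le_antisymm ?_ ?_⟩
  · exact span_le.mpr hbV
  · exact fun x hx => by simpa using hVb (Set.mem_image_of_mem id hx)

/-- If `w ⊆ X`, `w ⊆ V` and `w` spans `V`, then `X ∩ V` spans `V`. -/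
lemma span_inter_eq {𝔽 U : Type*} [Field 𝔽] [AddCommGroup U] [Module 𝔽 U]
    {X w : Set U} {V : Submodule 𝔽 U} (hwX : w ⊆ X) (hwV : w ⊆ (V : Set U))
    (hsp : span 𝔽 w = V) : span 𝔽 (X ∩ (V : Set U)) = V := by
  apply le_antisymm (span_le.mpr fun _ hx => hx.2)
  conv_lhs => rw [← hsp]
  exact span_mono fun x hx => ⟨hwX hx, hwV hx⟩

theorem six_subspaces_coordinated {𝔽 U : Type*} [Field 𝔽] [AddCommGroup U] [Module 𝔽 U]
    [FiniteDimensional 𝔽 U] (A B C : Submodule 𝔽 U) :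
    ∃ X : Set U, LinearIndependent 𝔽 (fun x : X => (x : U)) ∧
      Submodule.span 𝔽 (X ∩ ((A ⊓ B ⊓ C : Submodule 𝔽 U) : Set U)) = A ⊓ B ⊓ C ∧
      Submodule.span 𝔽 (X ∩ ((A ⊓ B : Submodule 𝔽 U) : Set U)) = A ⊓ B ∧
      Submodule.span 𝔽 (X ∩ ((A ⊓ C : Submodule 𝔽 U) : Set U)) = A ⊓ C ∧
      Submodule.span 𝔽 (X ∩ ((B ⊓ C : Submodule 𝔽 U) : Set U)) = B ⊓ C ∧
      Submodule.span 𝔽 (X ∩ (A : Set U)) = A ∧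
      Submodule.span 𝔽 (X ∩ (B : Set U)) = B := by
  classical
  -- a spanning independent set of D = A ⊓ B ⊓ C
  obtain ⟨s₀, hs₀sub, hs₀D, hs₀li, hs₀sp⟩ :=
    extend_in_submodule (A ⊓ B ⊓ C) (Set.empty_subset _) (linearIndependent_empty 𝔽 U)
  -- extend within A ⊓ B, A ⊓ C, B ⊓ C
  obtain ⟨tAB, hABsub, hABle, hABli, hABsp⟩ := extend_in_submodule (A ⊓ B)
    (hs₀D.trans (by exact_mod_cast inf_le_left)) hs₀li
  obtain ⟨tAC, hACsub, hACle, hACli, hACsp⟩ := extend_in_submodule (A ⊓ C)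
    (hs₀D.trans (by intro x hx; exact ⟨hx.1.1, hx.2⟩)) hs₀li
  obtain ⟨tBC, hBCsub, hBCle, hBCli, hBCsp⟩ := extend_in_submodule (B ⊓ C)
    (hs₀D.trans (by intro x hx; exact ⟨hx.1.2, hx.2⟩)) hs₀li
  -- tAB ∪ tAC is independent, inside A
  have hDAB : span 𝔽 s₀ = (A ⊓ B) ⊓ (A ⊓ C) := by rw [hs₀sp]; ext x; simp; tauto
  have liABAC : LinearIndependent 𝔽 (fun x : ↥(tAB ∪ tAC) => (x : U)) :=
    union_li_aux hDAB hABsub hACsub hABli hACli hABsp hACsp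
  have hABACle : tAB ∪ tAC ⊆ (A : Set U) :=
    Set.union_subset (fun x hx => (hABle hx).1) (fun x hx => (hACle hx).1)
  obtain ⟨tA, hAsub, hAle, hAli, hAsp⟩ := extend_in_submodule A hABACle liABAC
  -- tAB ∪ tBC is independent, inside B
  have hDBB : span 𝔽 s₀ = (A ⊓ B) ⊓ (B ⊓ C) := by rw [hs₀sp]; ext x; simp; tauto
  have liABBC : LinearIndependent 𝔽 (fun x : ↥(tAB ∪ tBC) => (x : U)) :=
    union_li_aux hDBB hABsub hBCsub hABli hBCli hABsp hBCsp
  have hABBCle : tAB ∪ tBC ⊆ (B : Set U) :=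
    Set.union_subset (fun x hx => (hABle hx).2) (fun x hx => (hBCle hx).1)
  obtain ⟨tB, hBsub, hBle, hBli, hBsp⟩ := extend_in_submodule B hABBCle liABBC
  -- the final set
  have hABtA : tAB ⊆ tA := (Set.subset_union_left).trans hAsub
  have hABtB : tAB ⊆ tB := (Set.subset_union_left).trans hBsub
  have hACtA : tAC ⊆ tA := (Set.subset_union_right).trans hAsub
  have hBCtB : tBC ⊆ tB := (Set.subset_union_right).trans hBsub
  have hX : LinearIndependent 𝔽 (fun x : ↥(tA ∪ tB) => (x : U)) :=
    union_li_aux hABsp hABtA hABtB hAli hBli hAsp hBsp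
  refine ⟨tA ∪ tB, hX,
    span_inter_eq ((hABsub.trans hABtA).trans Set.subset_union_left) hs₀D hs₀sp,
    span_inter_eq (hABtA.trans Set.subset_union_left) hABle hABsp,
    span_inter_eq (hACtA.trans Set.subset_union_left) hACle hACsp,
    span_inter_eq (hBCtB.trans Set.subset_union_right) hBCle hBCsp,
    span_inter_eq Set.subset_union_left hAle hAsp,
    span_inter_eq Set.subset_union_right hBle hBsp⟩
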